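/- Let M ≥ 1 be an integer, λ1, λ2 > 0, and b ∈ ℝ. Then ∫₀^∞ [γ(M, x²/λ1)/Γ(M)] · [e^{−(b−x)²/λ2}/√(π λ2)] dx = Q(−b√2/√λ2) − ∑_{k=0}^{M−1} [e^{−(b²/λ2)(1 − λ1/(λ1+λ2))}/(Γ(k+1) λ1^k √(π λ2))] · ∑_{n=0}^{2k} binom(2k, n) · (b/λ2)^{2k−n} · (1/λ1 + 1/λ2)^{−(2k+1/2−n/2)} · [Γ((n+1)/2) + c_n(b)·γ((n+1)/2, (b²/λ2)·λ1/(λ1+λ2))]/2. (This is the cumulative distribution function, at the point b, of the sum of a scaled chi variable with density f_{M,λ1} and an independent real Gaussian N(0, λ2/2).) -/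

import Mathlib

open Real MeasureTheory Finset

/-- The lower incomplete gamma function `γ(s, x) = ∫₀ˣ t^(s-1) e^(-t) dt`. -/
noncomputable def lowerIncGamma (s x : ℝ) : ℝ :=
  ∫ t in Set.Ioc (0 : ℝ) x, t ^ (s - 1) * Real.exp (-t)

/-- The sign coefficient `c_n(z) = (-1)^n` if `z ≥ 0` and `c_n(z) = -1` if `z < 0`. -/
noncomputable def cSign (n : ℕ) (z : ℝ) : ℝ :=
  if 0 ≤ z then (-1 : ℝ) ^ n else -1

/-- The Gaussian Q-function `Q(x) = (1/√(2π)) ∫_x^∞ e^{-t²/2} dt`. -/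
noncomputable def gaussQ (x : ℝ) : ℝ :=
  (1 / Real.sqrt (2 * Real.pi)) * ∫ t in Set.Ioi x, Real.exp (-t ^ 2 / 2)

open Set

lemma lig_nat (m : ℕ) (y : ℝ) (hy : 0 ≤ y) :
    lowerIncGamma (m + 1 : ℕ) y
      = (Nat.factorial m : ℝ) * (1 - Real.exp (-y) * ∑ k ∈ range (m + 1), y ^ k / (Nat.factorial k)) := by
  have hcast : ((m + 1 : ℕ) : ℝ) - 1 = (m : ℝ) := by push_cast; ring
  have h1 : lowerIncGamma (m + 1 : ℕ) y = ∫ t in (0:ℝ)..y, t ^ m * Real.exp (-t) := by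
    rw [lowerIncGamma, intervalIntegral.integral_of_le hy, hcast]
    simp_rw [Real.rpow_natCast]
  set F : ℝ → ℝ := fun t => -(Nat.factorial m : ℝ) * (Real.exp (-t) * ∑ k ∈ range (m + 1), t ^ k / (Nat.factorial k)) with hF
  have hderiv : ∀ t : ℝ, HasDerivAt F (t ^ m * Real.exp (-t)) t := by
    intro t
    have hsum : HasDerivAt (fun t : ℝ => ∑ k ∈ range (m + 1), t ^ k / (Nat.factorial k))
        (∑ k ∈ range (m + 1), (k : ℝ) * t ^ (k - 1) / (Nat.factorial k)) t := by
      apply HasDerivAt.fun_sum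
      intro k _
      exact (hasDerivAt_pow k t).div_const _
    have hexp : HasDerivAt (fun t : ℝ => Real.exp (-t)) (-Real.exp (-t)) t := by
      simpa using ((hasDerivAt_neg t).exp)
    have hmul := (hexp.mul hsum).const_mul (-(Nat.factorial m : ℝ))
    convert hmul using 1
    · rfl
    · rfl
    · rfl
    have hkey : ∑ k ∈ range (m + 1), (k : ℝ) * t ^ (k - 1) / (Nat.factorial k)
        = ∑ i ∈ range m, t ^ i / (Nat.factorial i) := by
      rw [Finset.sum_range_succ']
      simp only [Nat.cast_zero, zero_mul, Nat.factorial_zero, Nat.cast_one, zero_div, add_zero]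
      refine Finset.sum_congr rfl fun i _ => ?_
      rw [Nat.factorial_succ]
      have h1 : ((i:ℝ) + 1) ≠ 0 := by positivity
      have h2 : ((Nat.factorial i : ℝ)) ≠ 0 := by positivity
      push_cast
      field_simp
    rw [hkey, Finset.sum_range_succ]
    have h2 : ((Nat.factorial m : ℝ)) ≠ 0 := by positivity
    field_simp
    ring
  have hcont : ContinuousOn (fun t : ℝ => t ^ m * Real.exp (-t)) (uIcc 0 y) := by
    fun_prop
  have := intervalIntegral.integral_eq_sub_of_hasDerivAt (fun t _ => hderiv t)
    (hcont.intervalIntegrable)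
  rw [h1, this, hF]
  have h0 : ∑ k ∈ range (m + 1), (0:ℝ) ^ k / (Nat.factorial k) = 1 := by
    rw [Finset.sum_eq_single 0] <;> simp +contextual [Nat.pos_iff_ne_zero, zero_pow]
  simp [h0]
  ring

lemma Jinf (n : ℕ) {a : ℝ} (ha : 0 < a) :
    ∫ u in Set.Ioi (0:ℝ), u ^ n * Real.exp (-a * u ^ 2)
      = Real.Gamma (((n:ℝ) + 1) / 2) / (2 * a ^ (((n:ℝ) + 1) / 2)) := by
  have h := integral_rpow_mul_exp_neg_mul_rpow (p := 2) (q := n) two_pos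
    (by exact_mod_cast neg_one_lt_zero.trans_le (Nat.cast_nonneg (α := ℝ) n)) ha
  have h2 : ∀ x : ℝ, x ^ ((2:ℝ)) = x ^ (2:ℕ) := fun x => by
    rw [show ((2:ℝ)) = ((2:ℕ):ℝ) by norm_num, Real.rpow_natCast]
  simp_rw [h2, Real.rpow_natCast] at h
  rw [h, neg_div, Real.rpow_neg ha.le]
  have : (0:ℝ) < a ^ (((n:ℝ) + 1) / 2) := by positivity
  field_simp

lemma Jfin (n : ℕ) {a x : ℝ} (ha : 0 < a) (hx : 0 ≤ x) :
    ∫ u in Set.Ioc (0:ℝ) x, u ^ n * Real.exp (-a * u ^ 2)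
      = lowerIncGamma (((n:ℝ) + 1) / 2) (a * x ^ 2) / (2 * a ^ (((n:ℝ) + 1) / 2)) := by
  rcases eq_or_lt_of_le hx with rfl | hx
  · simp [lowerIncGamma]
  have himg : (fun u : ℝ => a * u ^ 2) '' Set.Ioc 0 x = Set.Ioc 0 (a * x ^ 2) := by
    ext t
    constructor
    · rintro ⟨u, ⟨hu0, hux⟩, rfl⟩
      refine ⟨by positivity, ?_⟩
      have : u ^ 2 ≤ x ^ 2 := by nlinarith
      simpa using mul_le_mul_of_nonneg_left this ha.le
    · rintro ⟨ht0, htx⟩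
      refine ⟨Real.sqrt (t / a), ⟨Real.sqrt_pos.2 (by positivity), ?_⟩, ?_⟩
      · rw [show x = Real.sqrt (x ^ 2) by rw [Real.sqrt_sq hx.le]]
        apply Real.sqrt_le_sqrt
        rw [div_le_iff₀ ha]
        linarith [htx]
      · have hsq : Real.sqrt (t / a) ^ 2 = t / a := Real.sq_sqrt (by positivity)
        simp only
        rw [hsq]
        field_simp
  have hinj : Set.InjOn (fun u : ℝ => a * u ^ 2) (Set.Ioc 0 x) := by
    intro u hu v hv huv
    simp only at huv
    have h2 : u ^ 2 = v ^ 2 := mul_left_cancel₀ ha.ne' huv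
    nlinarith [hu.1, hv.1]
  have hderiv : ∀ u ∈ Set.Ioc (0:ℝ) x, HasDerivWithinAt (fun u : ℝ => a * u ^ 2) (2 * a * u) (Set.Ioc 0 x) u := by
    intro u _
    have : HasDerivAt (fun u : ℝ => a * u ^ 2) (a * (2 * u)) u := by
      simpa using (hasDerivAt_pow 2 u).const_mul a
    exact (this.congr_deriv (by ring)).hasDerivWithinAt
  have key := MeasureTheory.integral_image_eq_integral_abs_deriv_smul measurableSet_Ioc hderiv hinj
    (fun t => t ^ (((n:ℝ) + 1) / 2 - 1) * Real.exp (-t))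
  rw [himg] at key
  have hL : lowerIncGamma (((n:ℝ) + 1) / 2) (a * x ^ 2) = ∫ u in Set.Ioc (0:ℝ) x,
      (2 * a ^ (((n:ℝ) + 1) / 2)) * (u ^ n * Real.exp (-a * u ^ 2)) := by
    rw [lowerIncGamma, key]
    refine setIntegral_congr_fun measurableSet_Ioc fun u hu => ?_
    have hu0 : 0 < u := hu.1
    have habs : |2 * a * u| = 2 * a * u := abs_of_pos (by positivity)
    rw [smul_eq_mul, habs]
    have h1 : (a * u ^ 2) ^ (((n:ℝ) + 1) / 2 - 1)
        = a ^ (((n:ℝ) + 1) / 2 - 1) * u ^ ((n:ℝ) - 1) := by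
      rw [Real.mul_rpow ha.le (by positivity), ← Real.rpow_natCast u 2, ← Real.rpow_mul hu0.le]
      congr 1
      push_cast
      ring
    rw [h1]
    have h2 : u * u ^ ((n:ℝ) - 1) = u ^ n := by
      rw [show u * u ^ ((n:ℝ) - 1) = u ^ (1:ℝ) * u ^ ((n:ℝ) - 1) by rw [Real.rpow_one],
        ← Real.rpow_add hu0, show (1:ℝ) + ((n:ℝ) - 1) = (n:ℝ) by ring, Real.rpow_natCast]
    have h3 : a * a ^ (((n:ℝ) + 1) / 2 - 1) = a ^ (((n:ℝ) + 1) / 2) := by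
      nth_rewrite 1 [show a = a ^ (1:ℝ) by rw [Real.rpow_one]]
      rw [← Real.rpow_add ha]
      ring_nf
    calc 2 * a * u * ((a ^ (((n:ℝ) + 1) / 2 - 1) * u ^ ((n:ℝ) - 1)) * Real.exp (-(a * u ^ 2)))
        = 2 * (a * a ^ (((n:ℝ) + 1) / 2 - 1)) * ((u * u ^ ((n:ℝ) - 1)) * Real.exp (-(a * u ^ 2))) := by ring
      _ = _ := by rw [h2, h3]; ring_nf
  rw [hL, MeasureTheory.integral_const_mul]
  have hpos : (0:ℝ) < 2 * a ^ (((n:ℝ) + 1) / 2) := by positivity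
  field_simp

lemma gauss_integrable (n : ℕ) {a : ℝ} (ha : 0 < a) :
    Integrable fun u : ℝ => u ^ n * Real.exp (-a * u ^ 2) := by
  have := integrable_rpow_mul_exp_neg_mul_sq ha (s := n)
    (by exact_mod_cast neg_one_lt_zero.trans_le (Nat.cast_nonneg (α := ℝ) n))
  simpa [Real.rpow_natCast] using this

lemma Jioi (n : ℕ) {a : ℝ} (ha : 0 < a) (μ : ℝ) :
    ∫ u in Set.Ioi (-μ), u ^ n * Real.exp (-a * u ^ 2)
      = (Real.Gamma (((n:ℝ) + 1) / 2)
          + cSign n μ * lowerIncGamma (((n:ℝ) + 1) / 2) (a * μ ^ 2)) / (2 * a ^ (((n:ℝ) + 1) / 2)) := by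
  have hint := gauss_integrable n ha
  rcases le_or_gt 0 μ with hμ | hμ
  · have hsplit : Set.Ioc (-μ) 0 ∪ Set.Ioi (0:ℝ) = Set.Ioi (-μ) :=
      Set.Ioc_union_Ioi_eq_Ioi (by linarith)
    rw [← hsplit, MeasureTheory.setIntegral_union (Set.Ioc_disjoint_Ioi le_rfl)
      measurableSet_Ioi hint.integrableOn hint.integrableOn]
    have h1 : ∫ u in Set.Ioc (-μ) 0, u ^ n * Real.exp (-a * u ^ 2)
        = (-1:ℝ) ^ n * ∫ u in Set.Ioc (0:ℝ) μ, u ^ n * Real.exp (-a * u ^ 2) := by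
      have e1 : ∫ u in Set.Ioc (-μ) 0, u ^ n * Real.exp (-a * u ^ 2)
          = ∫ u in (-μ)..0, u ^ n * Real.exp (-a * u ^ 2) := by
        rw [intervalIntegral.integral_of_le (by linarith)]
      have e2 : ∫ u in Set.Ioc (0:ℝ) μ, u ^ n * Real.exp (-a * u ^ 2)
          = ∫ u in (0:ℝ)..μ, u ^ n * Real.exp (-a * u ^ 2) := by
        rw [intervalIntegral.integral_of_le hμ]
      have e3 := intervalIntegral.integral_comp_neg (a := (0:ℝ)) (b := μ)
        (fun u => u ^ n * Real.exp (-a * u ^ 2))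
      simp only [neg_zero] at e3
      rw [e1, e2, ← e3]
      rw [← intervalIntegral.integral_const_mul]
      apply intervalIntegral.integral_congr
      intro u _
      simp only
      rw [neg_pow]
      ring_nf
    rw [h1, Jinf n ha, Jfin n ha hμ, cSign, if_pos hμ]
    ring
  · have hsplit : Set.Ioc 0 (-μ) ∪ Set.Ioi (-μ) = Set.Ioi (0:ℝ) :=
      Set.Ioc_union_Ioi_eq_Ioi (by linarith)
    have := MeasureTheory.setIntegral_union (s := Set.Ioc (0:ℝ) (-μ)) (t := Set.Ioi (-μ))
      (Set.Ioc_disjoint_Ioi le_rfl) measurableSet_Ioi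
      (f := fun u : ℝ => u ^ n * Real.exp (-a * u ^ 2)) hint.integrableOn hint.integrableOn
    rw [hsplit, Jinf n ha, Jfin n ha (by linarith)] at this
    have hsq : a * (-μ) ^ 2 = a * μ ^ 2 := by ring
    rw [hsq] at this
    rw [cSign, if_neg (by linarith)]
    have hgoal : (Real.Gamma (((n:ℝ) + 1) / 2) + -1 * lowerIncGamma (((n:ℝ) + 1) / 2) (a * μ ^ 2))
        / (2 * a ^ (((n:ℝ) + 1) / 2))
        = Real.Gamma (((n:ℝ) + 1) / 2) / (2 * a ^ (((n:ℝ) + 1) / 2))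
          - lowerIncGamma (((n:ℝ) + 1) / 2) (a * μ ^ 2) / (2 * a ^ (((n:ℝ) + 1) / 2)) := by ring
    rw [hgoal]
    linarith [this]

lemma shift_Ioi (f : ℝ → ℝ) (μ : ℝ) :
    ∫ x in Set.Ioi (0:ℝ), f x = ∫ u in Set.Ioi (-μ), f (u + μ) := by
  have := (measurePreserving_add_right (volume : Measure ℝ) μ).setIntegral_preimage_emb
    (measurableEmbedding_addRight μ) f (Set.Ioi (0:ℝ))
  rw [← this]
  congr 1
  ext u
  simp [neg_lt_iff_pos_add, add_comm]

lemma gauss_part {l2 : ℝ} (hl2 : 0 < l2) (b : ℝ) :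
    ∫ x in Set.Ioi (0:ℝ), Real.exp (-(b - x) ^ 2 / l2) / Real.sqrt (Real.pi * l2)
      = gaussQ (-b * Real.sqrt 2 / Real.sqrt l2) := by
  have hc : (0:ℝ) < Real.sqrt 2 / Real.sqrt l2 := by positivity
  have key : ∫ x in Set.Ioi (0:ℝ), Real.exp (-(b - x) ^ 2 / l2)
      = (Real.sqrt 2 / Real.sqrt l2)⁻¹ * ∫ t in Set.Ioi (-b * Real.sqrt 2 / Real.sqrt l2),
          Real.exp (-t ^ 2 / 2) := by
    rw [shift_Ioi (fun x => Real.exp (-(b - x) ^ 2 / l2)) b]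
    have congr1 : ∀ u : ℝ, Real.exp (-(b - (u + b)) ^ 2 / l2)
        = (fun t => Real.exp (-t ^ 2 / 2)) ((Real.sqrt 2 / Real.sqrt l2) * u) := by
      intro u
      simp only
      congr 1
      rw [mul_pow, div_pow, Real.sq_sqrt (by norm_num : (0:ℝ) ≤ 2), Real.sq_sqrt hl2.le]
      field_simp
      ring
    simp_rw [congr1]
    rw [MeasureTheory.integral_comp_mul_left_Ioi (fun t => Real.exp (-t ^ 2 / 2)) (-b) hc]
    rw [smul_eq_mul]
    congr 2
    ring
  rw [MeasureTheory.integral_div, key, gaussQ]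
  rw [show (Real.sqrt 2 / Real.sqrt l2)⁻¹ = Real.sqrt l2 / Real.sqrt 2 by rw [inv_div]]
  rw [show Real.sqrt (Real.pi * l2) = Real.sqrt Real.pi * Real.sqrt l2 from Real.sqrt_mul pi_pos.le l2,
    show Real.sqrt (2 * Real.pi) = Real.sqrt 2 * Real.sqrt Real.pi from Real.sqrt_mul (by norm_num) _]
  have h1 : Real.sqrt Real.pi > 0 := Real.sqrt_pos.2 pi_pos
  have h2 : Real.sqrt l2 > 0 := Real.sqrt_pos.2 hl2
  have h3 : Real.sqrt 2 > 0 := by positivity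
  field_simp

lemma binom_expand (k : ℕ) (μ a : ℝ) :
    (fun u : ℝ => (u + μ) ^ (2*k) * Real.exp (-a * u ^ 2))
      = fun u : ℝ => ∑ n ∈ range (2*k+1), (((2*k).choose n : ℝ) * μ ^ (2*k-n))
          * (u ^ n * Real.exp (-a * u ^ 2)) := by
  funext u
  rw [add_pow, Finset.sum_mul]
  exact Finset.sum_congr rfl fun n _ => by ring

lemma poly_gauss_integrable (k : ℕ) {a : ℝ} (ha : 0 < a) (μ : ℝ) :
    Integrable fun u : ℝ => (u + μ) ^ (2*k) * Real.exp (-a * u ^ 2) := by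
  rw [binom_expand]
  exact integrable_finset_sum _ fun n _ => (gauss_integrable n ha).const_mul _

lemma moment_shift (k : ℕ) {a : ℝ} (ha : 0 < a) (μ : ℝ) :
    ∫ x in Set.Ioi (0:ℝ), x ^ (2*k) * Real.exp (-a * (x - μ) ^ 2)
      = ∑ n ∈ range (2*k+1), (((2*k).choose n : ℝ) * μ ^ (2*k-n))
          * ((Real.Gamma (((n:ℝ) + 1) / 2)
              + cSign n μ * lowerIncGamma (((n:ℝ) + 1) / 2) (a * μ ^ 2))
             / (2 * a ^ (((n:ℝ) + 1) / 2))) := by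
  rw [shift_Ioi (fun x => x ^ (2*k) * Real.exp (-a * (x - μ) ^ 2)) μ]
  have h1 : ∀ u : ℝ, (fun x => x ^ (2*k) * Real.exp (-a * (x - μ) ^ 2)) (u + μ)
      = (u + μ) ^ (2*k) * Real.exp (-a * u ^ 2) := by
    intro u; simp [add_sub_cancel_right]
  simp_rw [h1, binom_expand k μ a]
  rw [MeasureTheory.integral_finset_sum _
    (fun n _ => ((gauss_integrable n ha).const_mul _).integrableOn)]
  exact Finset.sum_congr rfl fun n _ => by
    rw [MeasureTheory.integral_const_mul, Jioi n ha μ]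

/-- The cumulative distribution function, at the point `b`, of the sum of a scaled chi
variable with density `f_{M,λ₁}` and an independent real Gaussian `N(0, λ₂/2)`:
`∫₀^∞ [γ(M, x²/λ₁)/Γ(M)] [e^{-(b-x)²/λ₂}/√(π λ₂)] dx` equals the stated closed form. -/
theorem scaledChi_gaussian_convolution_cdf
    (M : ℕ) (hM : 1 ≤ M) (l1 l2 : ℝ) (hl1 : 0 < l1) (hl2 : 0 < l2) (b : ℝ) :
    ∫ x in Set.Ioi (0 : ℝ),
        (lowerIncGamma M (x ^ 2 / l1) / Real.Gamma M) *
          (Real.exp (-(b - x) ^ 2 / l2) / Real.sqrt (Real.pi * l2))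
      = gaussQ (-b * Real.sqrt 2 / Real.sqrt l2) -
        ∑ k ∈ Finset.range M,
          Real.exp (-(b ^ 2 / l2) * (1 - l1 / (l1 + l2))) /
              (Real.Gamma (k + 1) * l1 ^ k * Real.sqrt (Real.pi * l2)) *
            ∑ n ∈ Finset.range (2 * k + 1), ((2 * k).choose n : ℝ) *
              (b / l2) ^ (2 * k - n) *
              (1 / l1 + 1 / l2) ^ (-((2 * k : ℝ) + 1 / 2 - n / 2)) *
              ((Real.Gamma ((n + 1) / 2) +
                cSign n b * lowerIncGamma ((n + 1) / 2) ((b ^ 2 / l2) * (l1 / (l1 + l2)))) / 2) := by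
  obtain ⟨m, rfl⟩ : ∃ m, M = m + 1 := ⟨M - 1, (Nat.succ_pred_eq_of_pos hM).symm⟩
  have hl12 : (0:ℝ) < l1 + l2 := by linarith
  have hA : (0:ℝ) < 1/l1 + 1/l2 := by positivity
  have hsq : (0:ℝ) < Real.sqrt (Real.pi * l2) := Real.sqrt_pos.2 (by positivity)
  have hexp : ∀ x : ℝ, Real.exp (-(x^2/l1)) * Real.exp (-(b-x)^2/l2)
      = Real.exp (-(b ^ 2 / l2) * (1 - l1 / (l1 + l2)))
        * Real.exp (-((1/l1+1/l2)) * (x - b * l1 / (l1 + l2)) ^ 2) := by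
    intro x
    rw [← Real.exp_add, ← Real.exp_add]
    congr 1
    field_simp
    ring
  have hΓ : Real.Gamma ((m+1 : ℕ) : ℝ) = (Nat.factorial m : ℝ) := by
    rw [show ((m+1:ℕ):ℝ) = (m:ℝ) + 1 by push_cast; ring, Real.Gamma_nat_eq_factorial]
  have hfac : ∀ k : ℕ, ((Nat.factorial k : ℝ)) ≠ 0 := fun k => by positivity
  -- Step 1: pointwise rewriting of the integrand
  have hpoint : ∀ x ∈ Set.Ioi (0:ℝ),
      (lowerIncGamma ((m+1:ℕ):ℝ) (x ^ 2 / l1) / Real.Gamma ((m+1:ℕ):ℝ)) *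
          (Real.exp (-(b - x) ^ 2 / l2) / Real.sqrt (Real.pi * l2))
      = Real.exp (-(b - x) ^ 2 / l2) / Real.sqrt (Real.pi * l2)
        - ∑ k ∈ range (m+1),
            (Real.exp (-(b ^ 2 / l2) * (1 - l1 / (l1 + l2))) / (Nat.factorial k * l1^k * Real.sqrt (Real.pi * l2)))
            * (x^(2*k) * Real.exp (-((1/l1+1/l2)) * (x - b * l1 / (l1 + l2)) ^ 2)) := by
    intro x hx
    rw [lig_nat m (x^2/l1) (by positivity), hΓ, mul_div_cancel_left₀ _ (hfac m)]
    rw [sub_mul, one_mul, Finset.mul_sum, Finset.sum_mul]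
    congr 1
    refine Finset.sum_congr rfl fun k _ => ?_
    have hek := hexp x
    linear_combination (x^(2*k) / (l1^k * (Nat.factorial k : ℝ) * Real.sqrt (Real.pi * l2))) * hek
  rw [MeasureTheory.setIntegral_congr_fun measurableSet_Ioi hpoint]
  -- Step 2: integrability
  have hGint : IntegrableOn (fun x : ℝ => Real.exp (-(b - x) ^ 2 / l2) / Real.sqrt (Real.pi * l2))
      (Set.Ioi 0) := by
    apply Integrable.integrableOn
    have h1 : (fun x : ℝ => Real.exp (-(b - x) ^ 2 / l2))
        = fun x : ℝ => Real.exp (-(1/l2) * (x - b) ^ 2) := by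
      funext x; congr 1; ring
    have h2 := (integrable_exp_neg_mul_sq (show (0:ℝ) < 1/l2 by positivity)).comp_sub_right b
    rw [show (fun x : ℝ => Real.exp (-(b - x) ^ 2 / l2) / Real.sqrt (Real.pi * l2))
        = fun x : ℝ => Real.exp (-(b - x) ^ 2 / l2) / Real.sqrt (Real.pi * l2) from rfl]
    exact ((h1 ▸ h2 : Integrable fun x : ℝ => Real.exp (-(b - x) ^ 2 / l2))).div_const _
  have hHint : ∀ k : ℕ, IntegrableOn
      (fun x : ℝ => x^(2*k) * Real.exp (-((1/l1+1/l2)) * (x - b * l1 / (l1 + l2)) ^ 2))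
      (Set.Ioi 0) := by
    intro k
    apply Integrable.integrableOn
    have h := (poly_gauss_integrable k hA (b * l1 / (l1 + l2))).comp_sub_right (b * l1 / (l1 + l2))
    simpa [sub_add_cancel] using h
  have hsum_int : IntegrableOn (fun x : ℝ => ∑ k ∈ range (m+1),
      (Real.exp (-(b ^ 2 / l2) * (1 - l1 / (l1 + l2))) / (Nat.factorial k * l1^k * Real.sqrt (Real.pi * l2)))
      * (x^(2*k) * Real.exp (-((1/l1+1/l2)) * (x - b * l1 / (l1 + l2)) ^ 2))) (Set.Ioi 0) :=
    integrable_finset_sum _ fun k _ => (hHint k).const_mul _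
  rw [MeasureTheory.integral_sub hGint hsum_int,
    MeasureTheory.integral_finset_sum _ fun k _ => (hHint k).const_mul _]
  simp_rw [MeasureTheory.integral_const_mul]
  rw [gauss_part hl2 b]
  congr 1
  refine Finset.sum_congr rfl fun k _ => ?_
  rw [moment_shift k hA (b * l1 / (l1 + l2))]
  rw [Finset.mul_sum, Finset.mul_sum]
  refine Finset.sum_congr rfl fun n hn => ?_
  have hn' : n ≤ 2*k := by
    have := Finset.mem_range.1 hn; omega
  have hAμ : (1/l1+1/l2) * (b * l1 / (l1 + l2)) ^ 2 = (b ^ 2 / l2) * (l1 / (l1 + l2)) := by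
    field_simp
    ring
  have hsign : cSign n (b * l1 / (l1 + l2)) = cSign n b := by
    have hiff : (0 ≤ b * l1 / (l1 + l2)) ↔ (0 ≤ b) := by
      rw [mul_div_assoc, mul_nonneg_iff_of_pos_right (by positivity)]
    rw [cSign, cSign, if_congr hiff rfl rfl]
  have hΓk : Real.Gamma ((k:ℝ)+1) = (Nat.factorial k : ℝ) := Real.Gamma_nat_eq_factorial k
  have hμpow : (b * l1 / (l1 + l2)) ^ (2*k-n)
      = (b/l2)^(2*k-n) * ((1/l1+1/l2)⁻¹)^(2*k-n) := by
    rw [← mul_pow]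
    congr 1
    rw [eq_comm, mul_comm, inv_mul_eq_div, div_eq_iff (by positivity : (1/l1+1/l2) ≠ 0)]
    field_simp
    ring
  have hApow : (1/l1+1/l2) ^ (-((2 * (k:ℝ)) + 1/2 - (n:ℝ)/2))
      = ((1/l1+1/l2)⁻¹)^(2*k-n) * ((1/l1+1/l2) ^ (((n:ℝ)+1)/2))⁻¹ := by
    rw [show -((2 * (k:ℝ)) + 1/2 - (n:ℝ)/2) = -(((2*k-n : ℕ)):ℝ) + -(((n:ℝ)+1)/2) by
      rw [Nat.cast_sub hn']; push_cast; ring]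
    rw [Real.rpow_add hA, Real.rpow_neg hA.le, Real.rpow_neg hA.le, Real.rpow_natCast, ← inv_pow]
  rw [hAμ, hsign, hΓk, hμpow, hApow]
  have hpos : ((1/l1+1/l2) ^ (((n:ℝ)+1)/2)) ≠ 0 := by positivity
  field_simp
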